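/- Suppose M is a totally k-bounded L-structure over a finite relational language of maximum arity r ≥ 2, and M contains an infinite component. Then for every integer t ≥ 1 there exists t' with t ≤ t' ≤ tr and an induced substructure M' ⊆ M such that M' contains infinitely many distinct components of size t'. -/

import Mathlib

open FirstOrder FirstOrder.Language

/-- The structure induced on `N` by pulling back the relations of a relational structure
on `M` along a map `f : N → M`. -/
def pullbackStruct (L : FirstOrder.Language) [L.IsRelational] {M N : Type*}
    [L.Structure M] (f : N → M) : L.Structure N where
  funMap := fun {_} F _ => isEmptyElim F
  RelMap := fun {_} R v => Structure.RelMap R (f ∘ v)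

/-- One step of a path inside `A`. -/
def StepIn (L : FirstOrder.Language) {M : Type*} [L.Structure M] (A : Set M)
    (x y : M) : Prop :=
  x ∈ A ∧ y ∈ A ∧ ∃ (n : ℕ) (R : L.Relations n) (v : Fin n → M),
    Structure.RelMap R v ∧ (∀ i, v i ∈ A) ∧ x ∈ Set.range v ∧ y ∈ Set.range v

/-- A set is connected if any two of its elements are joined by a path of overlapping
relation tuples inside the set. -/
def IsConnectedSet (L : FirstOrder.Language) {M : Type*} [L.Structure M]
    (A : Set M) : Prop :=
  ∀ a ∈ A, ∀ b ∈ A, Relation.ReflTransGen (StepIn L A) a b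

/-- A component is a maximal connected set. -/
def IsComponent (L : FirstOrder.Language) {M : Type*} [L.Structure M]
    (A : Set M) : Prop :=
  IsConnectedSet L A ∧ ∀ B : Set M, A ⊆ B → IsConnectedSet L B → B = A

/-- Totally `k`-bounded structure. -/
def TotallyBddStruct (L : FirstOrder.Language) (M : Type*) [L.Structure M]
    (k : ℕ) : Prop :=
  ∀ (s : ℕ) (R : L.Relations s) (I : Finset (Fin s)), I.Nonempty → I ≠ Finset.univ →
    ∀ v : Fin s → M,
      {w : Fin s → M | Structure.RelMap R w ∧ ∀ i ∈ I, w i = v i}.Finite ∧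
      {w : Fin s → M | Structure.RelMap R w ∧ ∀ i ∈ I, w i = v i}.ncard < k

section Aux
variable (L : FirstOrder.Language) {M : Type*} [L.Structure M]

/-- neighborhood of a set: all points of relation tuples meeting `B`. -/
def Nbr (B : Set M) : Set M :=
  {y | ∃ (n : ℕ) (R : L.Relations n) (v : Fin n → M),
      Structure.RelMap R v ∧ (∃ i, v i ∈ B) ∧ y ∈ Set.range v}

lemma range_subset_nbr {B : Set M} {n : ℕ} {R : L.Relations n} {v : Fin n → M}
    (hR : Structure.RelMap R v) (hm : ∃ i, v i ∈ B) : Set.range v ⊆ Nbr L B := by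
  intro y hy
  exact ⟨n, R, v, hR, hm, hy⟩

variable {L}

lemma tupfin {k : ℕ} (hbdd : TotallyBddStruct L M k) (n : ℕ) (R : L.Relations n)
    (i : Fin n) (a : M) :
    {w : Fin n → M | Structure.RelMap R w ∧ w i = a}.Finite := by
  match n with
  | 0 => exact isEmptyElim i
  | 1 =>
    apply Set.Finite.subset (Set.finite_singleton (fun _ : Fin 1 => a))
    rintro w ⟨-, hw⟩
    funext j
    have : j = i := Subsingleton.elim _ _
    simp [this, hw]
  | (m+2) =>
    obtain ⟨j, hj⟩ := exists_ne i
    have hne : ({i} : Finset (Fin (m+2))) ≠ Finset.univ := by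
      intro h
      have : j ∈ ({i} : Finset (Fin (m+2))) := h ▸ Finset.mem_univ j
      simp at this
      exact hj this
    have := (hbdd (m+2) R {i} (Finset.singleton_nonempty i) hne (fun _ => a)).1
    apply this.subset
    rintro w ⟨h1, h2⟩
    exact ⟨h1, by simpa using h2⟩

lemma nbr_finite [∀ n, Finite (L.Relations n)] {k r : ℕ} (hbdd : TotallyBddStruct L M k)
    (harity : ∀ n, r < n → IsEmpty (L.Relations n))
    {B : Set M} (hB : B.Finite) : (Nbr L B).Finite := by
  have hsub : Nbr L B ⊆
      ⋃ (a ∈ B), ⋃ (n : Fin (r+1)), ⋃ (R : L.Relations n.1), ⋃ (i : Fin n.1),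
        ⋃ (w ∈ {w : Fin n.1 → M | Structure.RelMap R w ∧ w i = a}), Set.range w := by
    rintro y ⟨n, R, v, hR, ⟨i, hvi⟩, hy⟩
    have hnr : n ≤ r := by
      by_contra h
      exact (harity n (by omega)).false R
    refine Set.mem_biUnion hvi ?_
    refine Set.mem_iUnion.2 ⟨⟨n, by omega⟩, ?_⟩
    refine Set.mem_iUnion.2 ⟨R, ?_⟩
    refine Set.mem_iUnion.2 ⟨i, ?_⟩
    exact Set.mem_biUnion ⟨hR, rfl⟩ hy
  apply Set.Finite.subset _ hsub
  apply hB.biUnion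
  intro a _
  apply Set.finite_iUnion
  intro n
  apply Set.finite_iUnion
  intro R
  apply Set.finite_iUnion
  intro i
  apply Set.Finite.biUnion (tupfin hbdd n.1 R i a)
  intro w _
  exact Set.finite_range w

end Aux
section Aux2
variable {L : FirstOrder.Language} {M : Type*} [L.Structure M]

lemma stepIn_symm {A : Set M} {x y : M} (h : StepIn L A x y) : StepIn L A y x :=
  ⟨h.2.1, h.1, by obtain ⟨n, R, v, h1, h2, h3, h4⟩ := h.2.2; exact ⟨n, R, v, h1, h2, h4, h3⟩⟩

lemma stepIn_mono {A B : Set M} (hAB : A ⊆ B) {x y : M} (h : StepIn L A x y) :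
    StepIn L B x y := by
  obtain ⟨hx, hy, n, R, v, h1, h2, h3, h4⟩ := h
  exact ⟨hAB hx, hAB hy, n, R, v, h1, fun i => hAB (h2 i), h3, h4⟩

lemma rtg_mono {A B : Set M} (hAB : A ⊆ B) {x y : M}
    (h : Relation.ReflTransGen (StepIn L A) x y) :
    Relation.ReflTransGen (StepIn L B) x y := by
  induction h with
  | refl => exact .refl
  | tail _ hs ih => exact ih.tail (stepIn_mono hAB hs)

lemma rtg_symm {A : Set M} {x y : M}
    (h : Relation.ReflTransGen (StepIn L A) x y) :
    Relation.ReflTransGen (StepIn L A) y x := by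
  induction h with
  | refl => exact .refl
  | tail _ hs ih => exact Relation.ReflTransGen.head (stepIn_symm hs) ih

/-- a relation tuple meeting a connected set extends it to a connected set -/
lemma conn_union_tuple {B : Set M} (hB : IsConnectedSet L B)
    {n : ℕ} {R : L.Relations n} {v : Fin n → M} (hR : Structure.RelMap R v)
    (hm : ∃ i, v i ∈ B) : IsConnectedSet L (B ∪ Set.range v) := by
  obtain ⟨i₀, hi₀⟩ := hm
  have hstep : ∀ x ∈ Set.range v, ∀ y ∈ Set.range v, StepIn L (B ∪ Set.range v) x y := by
    intro x hx y hy
    exact ⟨Or.inr hx, Or.inr hy, n, R, v, hR, fun i => Or.inr ⟨i, rfl⟩, hx, hy⟩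
  intro a ha b hb
  rcases ha with ha | ha <;> rcases hb with hb | hb
  · exact rtg_mono Set.subset_union_left (hB a ha b hb)
  · exact (rtg_mono Set.subset_union_left (hB a ha (v i₀) hi₀)).tail
      (hstep _ ⟨i₀, rfl⟩ _ hb)
  · exact Relation.ReflTransGen.head (hstep _ ha _ ⟨i₀, rfl⟩)
      (rtg_mono Set.subset_union_left (hB (v i₀) hi₀ b hb))
  · exact Relation.ReflTransGen.single (hstep _ ha _ hb)

/-- first exit: a path from inside B to anywhere either stays in B or uses a tuple
straddling B -/
lemma first_exit {B C : Set M} {b : M} (hb : b ∈ B) :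
    ∀ c, Relation.ReflTransGen (StepIn L C) b c → c ∈ B ∨
      ∃ (n : ℕ) (R : L.Relations n) (v : Fin n → M),
        Structure.RelMap R v ∧ (∀ i, v i ∈ C) ∧ (∃ i, v i ∈ B) ∧ (∃ i, v i ∉ B) := by
  intro c h
  induction h with
  | refl => exact Or.inl hb
  | tail _ hs ih =>
    rcases ih with ih | ih
    · obtain ⟨_, _, n, R, v, h1, h2, h3, h4⟩ := hs
      by_cases hall : ∀ i, v i ∈ B
      · left; obtain ⟨j, hj⟩ := h4; exact hj ▸ hall j
      · right
        push_neg at hall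
        obtain ⟨j, hj⟩ := h3
        exact ⟨n, R, v, h1, h2, ⟨j, hj ▸ ih⟩, hall⟩
    · exact Or.inr ih

lemma ncard_range_le {n : ℕ} (v : Fin n → M) : (Set.range v).ncard ≤ n := by
  classical
  rw [← Set.image_univ, ← Finset.coe_univ, ← Finset.coe_image, Set.ncard_coe_finset]
  simpa using Finset.card_image_le (s := (Finset.univ : Finset (Fin n))) (f := v)

lemma grow {r t : ℕ} (hr : 2 ≤ r) (ht : 1 ≤ t)
    (harity : ∀ n, r < n → IsEmpty (L.Relations n))
    {C : Set M} (hCi : C.Infinite) (hCc : IsConnectedSet L C) :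
    ∃ B, B ⊆ C ∧ B.Finite ∧ IsConnectedSet L B ∧ t ≤ B.ncard ∧ B.ncard ≤ t + r - 1 := by
  have main : ∀ m : ℕ, ∀ B : Set M, B ⊆ C → B.Finite → B.Nonempty →
      IsConnectedSet L B → B.ncard ≤ t + r - 1 → t ≤ B.ncard + m →
      ∃ B', B' ⊆ C ∧ B'.Finite ∧ IsConnectedSet L B' ∧ t ≤ B'.ncard ∧
        B'.ncard ≤ t + r - 1 := by
    intro m
    induction m with
    | zero => intro B h1 h2 _ h4 h5 h6; exact ⟨B, h1, h2, h4, by omega, h5⟩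
    | succ m ih =>
      intro B h1 h2 h3 h4 h5 h6
      by_cases hle : t ≤ B.ncard
      · exact ⟨B, h1, h2, h4, hle, h5⟩
      push_neg at hle
      -- find straddling tuple
      obtain ⟨b, hb⟩ := h3
      obtain ⟨c, hc, hcB⟩ : ∃ c ∈ C, c ∉ B := by
        by_contra h
        push_neg at h
        exact hCi (h2.subset h)
      rcases first_exit hb c (hCc b (h1 hb) c hc) with h | ⟨n, R, v, hR, hvC, hvB, j, hj⟩
      · exact absurd h hcB
      · have hnr : n ≤ r := by
          by_contra h
          exact (harity n (by omega)).false R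
        set B' := B ∪ Set.range v with hB'
        have hB'C : B' ⊆ C := Set.union_subset h1 (by rintro x ⟨i, rfl⟩; exact hvC i)
        have hB'f : B'.Finite := h2.union (Set.finite_range v)
        have hss : B ⊂ B' := by
          constructor
          · exact Set.subset_union_left
          · intro hsub
            exact hj (hsub (Or.inr ⟨j, rfl⟩))
        have hlt : B.ncard < B'.ncard := Set.ncard_lt_ncard hss hB'f
        have hle' : B'.ncard ≤ B.ncard + r := by
          calc B'.ncard ≤ B.ncard + (Set.range v).ncard := Set.ncard_union_le _ _
            _ ≤ B.ncard + n := by have := ncard_range_le v; omega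
            _ ≤ B.ncard + r := by omega
        exact ih B' hB'C hB'f ⟨b, Or.inl hb⟩ (conn_union_tuple h4 hR hvB)
          (by omega) (by omega)
  obtain ⟨a, ha⟩ := hCi.nonempty
  have hsing : IsConnectedSet L ({a} : Set M) := by
    intro x hx y hy
    simp only [Set.mem_singleton_iff] at hx hy
    subst hx; subst hy; exact .refl
  exact main t {a} (by simpa using ha) (Set.finite_singleton a) ⟨a, rfl⟩ hsing
    (by simp; omega) (by simp)

end Aux2
section Aux3
variable {L : FirstOrder.Language} {M : Type*} [L.Structure M]

lemma stepIn_mem_right {A : Set M} {x y : M} (h : StepIn L A x y) : y ∈ A := h.2.1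

/-- the reachability class of x in S -/
def Cls (L : FirstOrder.Language) {M : Type*} [L.Structure M] (S : Set M) (x : M) :
    Set M := {y | Relation.ReflTransGen (StepIn L S) x y}

lemma cls_subset {S : Set M} {x : M} (hx : x ∈ S) : Cls L S x ⊆ S := by
  intro y hy
  induction hy with
  | refl => exact hx
  | tail _ hs _ => exact stepIn_mem_right hs

/-- a tuple inside S meeting a class lies in the class -/
lemma tuple_subset_cls {S : Set M} {x : M} {n : ℕ} {R : L.Relations n} {v : Fin n → M}
    (hR : Structure.RelMap R v) (hvS : ∀ i, v i ∈ S) {i₀ : Fin n} (hi₀ : v i₀ ∈ Cls L S x) :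
    ∀ i, v i ∈ Cls L S x := by
  intro i
  exact Relation.ReflTransGen.tail hi₀
    ⟨hvS i₀, hvS i, n, R, v, hR, hvS, ⟨i₀, rfl⟩, ⟨i, rfl⟩⟩

/-- path transport into a class -/
lemma rtg_in_cls {S : Set M} {x a : M} (ha : a ∈ Cls L S x) :
    ∀ b, Relation.ReflTransGen (StepIn L S) a b →
      Relation.ReflTransGen (StepIn L (Cls L S x)) a b := by
  intro b h
  induction h with
  | refl => exact .refl
  | @tail p q hap hs ih =>
    have hp : p ∈ Cls L S x := Relation.ReflTransGen.trans ha hap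
    obtain ⟨hpS, hqS, n, R, v, h1, h2, ⟨i, hi⟩, h4⟩ := hs
    have hall : ∀ j, v j ∈ Cls L S x := tuple_subset_cls h1 h2 (i₀ := i) (hi ▸ hp)
    have hq : q ∈ Cls L S x := by obtain ⟨j, hj⟩ := h4; exact hj ▸ hall j
    exact ih.tail ⟨hp, hq, n, R, v, h1, hall, ⟨i, hi⟩, h4⟩

lemma cls_connected {S : Set M} {x : M} (hx : x ∈ S) : IsConnectedSet L (Cls L S x) := by
  intro a ha b hb
  have hax : Relation.ReflTransGen (StepIn L S) a x := rtg_symm ha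
  exact rtg_in_cls ha b (hax.trans hb)

/-- Claim A: if the class of x avoids Nbr G, it swallows every A-path -/
lemma clsA {A G : Set M} {x : M} (hx : x ∈ A \ G)
    (hdisj : ∀ q ∈ Cls L (A \ G) x, q ∉ Nbr L G) :
    ∀ y, Relation.ReflTransGen (StepIn L A) x y → y ∈ Cls L (A \ G) x := by
  intro y h
  induction h with
  | refl => exact .refl
  | @tail p q _ hs ih =>
    obtain ⟨hpA, hqA, n, R, v, h1, h2, ⟨i, hi⟩, ⟨j, hj⟩⟩ := hs
    by_cases hG : ∃ m, v m ∈ G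
    · exact absurd (⟨n, R, v, h1, hG, ⟨i, hi⟩⟩ : p ∈ Nbr L G) (hdisj p ih)
    · push_neg at hG
      have hvS : ∀ m, v m ∈ A \ G := fun m => ⟨h2 m, hG m⟩
      have hpS : p ∈ A \ G := cls_subset hx ih
      have hqS : q ∈ A \ G := hi ▸ hvS _ |>.imp id id |> fun _ => hj ▸ hvS j
      exact ih.tail ⟨hpS, hj ▸ hvS j, n, R, v, h1, hvS, ⟨i, hi⟩, ⟨j, hj⟩⟩

/-- splitting: removing a finite set from an infinite connected set leaves an
infinite connected-in-itself piece -/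
lemma split {A G : Set M} (hAinf : A.Infinite) (hAc : IsConnectedSet L A)
    (hGfin : G.Finite) (hNfin : (Nbr L G).Finite) :
    ∃ C, C ⊆ A \ G ∧ C.Infinite ∧ IsConnectedSet L C := by
  set S := A \ G with hS
  have hSinf : S.Infinite := hAinf.diff hGfin
  suffices h : ∃ x ∈ S, (Cls L S x).Infinite by
    obtain ⟨x, hx, hcx⟩ := h
    exact ⟨Cls L S x, cls_subset hx, hcx, cls_connected hx⟩
  by_contra h
  push_neg at h
  have hfin : ∀ x ∈ S, (Cls L S x).Finite := by
    intro x hx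
    by_contra hc
    exact hc (h x hx)
  set T := Nbr L G ∩ S with hT
  have hTfin : T.Finite := hNfin.inter_of_left _
  set D := ⋃ p ∈ T, Cls L S p with hD
  have hDfin : D.Finite := hTfin.biUnion (fun p hp => hfin p hp.2)
  obtain ⟨x, hxS, hxD⟩ : ∃ x ∈ S, x ∉ D := by
    obtain ⟨x, hx1, hx2⟩ := (hSinf.diff hDfin).nonempty
    exact ⟨x, hx1, hx2⟩
  have hdisj : ∀ q ∈ Cls L S x, q ∉ Nbr L G := by
    intro q hq hqN
    have hqS : q ∈ S := cls_subset hxS hq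
    have : x ∈ Cls L S q := rtg_symm hq
    exact hxD (Set.mem_biUnion (⟨hqN, hqS⟩ : q ∈ T) this)
  have hsub : S ⊆ Cls L S x := by
    intro y hy
    exact clsA hxS hdisj y (hAc x hxS.1 y hy.1)
  exact (hSinf.mono hsub) (hfin x hxS)

end Aux3
section Aux4
variable {L : FirstOrder.Language} [L.IsRelational] {M : Type*} [L.Structure M]

lemma piece_is_component (f : ℕ → Set M) (S : Set ℕ) (X : Set M)
    (hXsub : ∀ m ∈ S, f m ⊆ X)
    (hXcov : ∀ x ∈ X, ∃ m ∈ S, x ∈ f m)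
    (hconn : ∀ m ∈ S, IsConnectedSet L (f m))
    (hsep : ∀ i m, i < m → f m ∩ (f i ∪ Nbr L (f i)) = ∅)
    {n : ℕ} (hn : n ∈ S) (hne : (f n).Nonempty) :
    @IsComponent L X (pullbackStruct L (Subtype.val : X → M))
      {x : X | (x : M) ∈ f n} := by
  letI : L.Structure X := pullbackStruct L (Subtype.val : X → M)
  have hfX : f n ⊆ X := hXsub n hn
  set An : Set X := {x : X | (x : M) ∈ f n} with hAn
  -- separation
  have sep : ∀ (m : ℕ) (R : L.Relations m) (v : Fin m → M), Structure.RelMap R v →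
      (∀ i, v i ∈ X) → (∃ i, v i ∈ f n) → ∀ i, v i ∈ f n := by
    rintro m R v hR hvX ⟨j, hj⟩ i
    obtain ⟨m', hm', hi⟩ := hXcov _ (hvX i)
    rcases lt_trichotomy m' n with h | h | h
    · have hnb : v j ∈ Nbr L (f m') := range_subset_nbr L hR ⟨i, hi⟩ ⟨j, rfl⟩
      have := hsep m' n h
      exact (Set.eq_empty_iff_forall_notMem.mp this (v j) ⟨hj, Or.inr hnb⟩).elim
    · exact h ▸ hi
    · have hnb : v i ∈ Nbr L (f n) := range_subset_nbr L hR ⟨j, hj⟩ ⟨i, rfl⟩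
      have := hsep n m' h
      exact (Set.eq_empty_iff_forall_notMem.mp this (v i) ⟨hi, Or.inr hnb⟩).elim
  -- lifting steps
  have liftstep : ∀ p q : X, StepIn L (f n) ↑p ↑q → StepIn L An p q := by
    rintro p q ⟨hp, hq, m, R, v, h1, h2, ⟨i, hi⟩, ⟨j, hj⟩⟩
    refine ⟨hp, hq, m, R, fun l => ⟨v l, hfX (h2 l)⟩, ?_, fun l => h2 l,
      ⟨i, Subtype.ext hi⟩, ⟨j, Subtype.ext hj⟩⟩
    exact h1
  have hconnAn : IsConnectedSet L An := by
    intro a ha b hb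
    have hpath := hconn n hn ↑a ha ↑b hb
    have main : ∀ y, Relation.ReflTransGen (StepIn L (f n)) ↑a y → ∀ x' : X, ↑x' = y →
        Relation.ReflTransGen (StepIn L An) a x' := by
      intro y h
      induction h with
      | refl =>
        intro x' hx'
        have : x' = a := Subtype.ext hx'
        subst this; exact .refl
      | @tail p q hp hs ih =>
        intro x' hx'
        have hpfn : p ∈ f n := hs.1
        have hp' := ih ⟨p, hfX hpfn⟩ rfl
        exact hp'.tail (liftstep ⟨p, hfX hpfn⟩ x' (by rw [hx']; exact hs))
    exact main ↑b hpath b rfl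
  refine ⟨hconnAn, ?_⟩
  intro B hsub hconnB
  obtain ⟨a0, ha0⟩ := hne
  have ha0X : a0 ∈ X := hfX ha0
  have ha0An : (⟨a0, ha0X⟩ : X) ∈ An := ha0
  apply Set.Subset.antisymm _ hsub
  intro c hc
  have hpath := hconnB _ (hsub ha0An) c hc
  have main : ∀ c : X, Relation.ReflTransGen (StepIn L B) (⟨a0, ha0X⟩ : X) c → c ∈ An := by
    intro c h
    induction h with
    | refl => exact ha0An
    | @tail p q hp hs ih =>
      obtain ⟨hpB, hqB, m, R, w, h1, h2, ⟨i, hi⟩, ⟨j, hj⟩⟩ := hs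
      have hRv : Structure.RelMap R (fun l => ((w l : X) : M)) := h1
      have hall := sep m R (fun l => ↑(w l)) hRv (fun l => (w l).2)
        ⟨i, show ((w i : X) : M) ∈ f n by rw [hi]; exact ih⟩
      have hqn : ((w j : X) : M) ∈ f n := hall j
      show ((q : X) : M) ∈ f n
      rw [← hj]
      exact hqn
  exact main c hpath

end Aux4
/-- if a totally `k`-bounded structure over a finite relational language of
maximum arity `r ≥ 2` has an infinite component, then for every `t ≥ 1` there are
`t ≤ t' ≤ tr` and an induced substructure (on a subset `X`) with infinitely many distinct
components of size `t'`. -/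
theorem stmt15 (L : FirstOrder.Language) [L.IsRelational]
    [∀ n, Finite (L.Relations n)] (r k : ℕ) (hr : 2 ≤ r)
    (harity : ∀ n, r < n → IsEmpty (L.Relations n))
    (M : Type*) [L.Structure M] (hbdd : TotallyBddStruct L M k)
    (hinf : ∃ A : Set M, IsComponent L A ∧ A.Infinite) :
    ∀ t : ℕ, 1 ≤ t → ∃ t', t ≤ t' ∧ t' ≤ t * r ∧
      ∃ X : Set M,
        {A : Set X |
          @IsComponent L X (pullbackStruct L (Subtype.val : X → M)) A ∧
            A.ncard = t'}.Infinite := by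
  obtain ⟨A, ⟨hAc, -⟩, hAinf⟩ := hinf
  intro t ht
  have key : ∀ G : Set M, ∃ B : Set M, B.Finite ∧ (G.Finite →
      (B ⊆ A \ G ∧ IsConnectedSet L B ∧ t ≤ B.ncard ∧ B.ncard ≤ t + r - 1)) := by
    intro G
    by_cases hG : G.Finite
    · obtain ⟨C, hC1, hC2, hC3⟩ := split hAinf hAc hG (nbr_finite hbdd harity hG)
      obtain ⟨B, hB1, hB2, hB3, hB4, hB5⟩ := grow hr ht harity hC2 hC3
      exact ⟨B, hB2, fun _ => ⟨hB1.trans hC1, hB3, hB4, hB5⟩⟩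
    · exact ⟨∅, Set.finite_empty, fun h => absurd h hG⟩
  let pick : Set M → Set M := fun G => Classical.choose (key G)
  have hpick : ∀ G : Set M, (pick G).Finite ∧ (G.Finite →
      (pick G ⊆ A \ G ∧ IsConnectedSet L (pick G) ∧ t ≤ (pick G).ncard ∧
        (pick G).ncard ≤ t + r - 1)) := fun G => Classical.choose_spec (key G)
  let Gs : ℕ → Set M := fun n => Nat.rec (∅ : Set M)
      (fun _ Gp => Gp ∪ (pick Gp ∪ Nbr L (pick Gp))) n
  let f : ℕ → Set M := fun n => pick (Gs n)
  have hffin : ∀ n, (f n).Finite := fun n => (hpick (Gs n)).1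
  have hGfin : ∀ n, (Gs n).Finite := by
    intro n
    induction n with
    | zero => exact Set.finite_empty
    | succ n ih =>
      exact ih.union ((hpick _).1.union (nbr_finite hbdd harity (hpick _).1))
  have hf : ∀ n, f n ⊆ A \ Gs n ∧ IsConnectedSet L (f n) ∧ t ≤ (f n).ncard ∧
      (f n).ncard ≤ t + r - 1 := fun n => (hpick (Gs n)).2 (hGfin n)
  have hGmono : ∀ i n, i ≤ n → Gs i ⊆ Gs n := by
    intro i n h
    induction n with
    | zero =>
      have : i = 0 := by omega
      subst this; exact subset_rfl
    | succ n ih =>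
      by_cases h' : i ≤ n
      · exact (ih h').trans Set.subset_union_left
      · have : i = n + 1 := by omega
        subst this; exact subset_rfl
  have hsub1 : ∀ i n, i < n → (f i ∪ Nbr L (f i)) ⊆ Gs n := by
    intro i n h
    have h1 : (f i ∪ Nbr L (f i)) ⊆ Gs (i + 1) := Set.subset_union_right
    exact h1.trans (hGmono (i + 1) n (by omega))
  have hsep : ∀ i n, i < n → f n ∩ (f i ∪ Nbr L (f i)) = ∅ := by
    intro i n h
    rw [Set.eq_empty_iff_forall_notMem]
    rintro x ⟨hx1, hx2⟩
    exact ((hf n).1 hx1).2 (hGmono n n le_rfl (hsub1 i n h hx2))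
  have hfne : ∀ n, (f n).Nonempty := by
    intro n
    rw [← Set.ncard_pos (hffin n)]
    have := (hf n).2.2.1
    omega
  have hfdisj : ∀ i n, i ≠ n → ∀ x, x ∈ f i → x ∈ f n → False := by
    intro i n hne x hxi hxn
    rcases lt_or_gt_of_ne hne with h | h
    · exact Set.eq_empty_iff_forall_notMem.mp (hsep i n h) x ⟨hxn, Or.inl hxi⟩
    · exact Set.eq_empty_iff_forall_notMem.mp (hsep n i h) x ⟨hxi, Or.inl hxn⟩
  -- pigeonhole on sizes
  let g : ℕ → Fin r := fun n => ⟨(f n).ncard - t, by have := (hf n).2.2; omega⟩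
  obtain ⟨y, hy⟩ := Finite.exists_infinite_fiber g
  set t' := t + y.val with ht'
  set S : Set ℕ := {n | (f n).ncard = t'} with hSdef
  have hfibS : g ⁻¹' {y} ⊆ S := by
    intro n hn
    simp only [Set.mem_preimage, Set.mem_singleton_iff] at hn
    have h1 : (f n).ncard - t = y.val := congrArg Fin.val hn
    have := (hf n).2.2.1
    simp only [hSdef, Set.mem_setOf_eq, ht']
    omega
  have hSinf : S.Infinite := (Set.infinite_coe_iff.mp hy).mono hfibS
  obtain ⟨n₀, hn₀⟩ := hSinf.nonempty
  have htr : t' ≤ t * r := by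
    have h1 : t' = (f n₀).ncard := hn₀.symm
    have h2 := (hf n₀).2.2.2
    have h3 : t + r - 1 ≤ t * r := by
      obtain ⟨t₀, rfl⟩ : ∃ t₀, t = t₀ + 1 := ⟨t - 1, by omega⟩
      obtain ⟨r₀, rfl⟩ : ∃ r₀, r = r₀ + 2 := ⟨r - 2, by omega⟩
      have h4 : (t₀ + 1) * (r₀ + 2) = t₀ * r₀ + 2 * t₀ + r₀ + 2 := by ring
      omega
    omega
  refine ⟨t', by omega, htr, ?_⟩
  set X : Set M := ⋃ n ∈ S, f n with hX
  refine ⟨X, ?_⟩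
  have hXsub : ∀ m ∈ S, f m ⊆ X := fun m hm => Set.subset_biUnion_of_mem hm
  have hXcov : ∀ x ∈ X, ∃ m ∈ S, x ∈ f m := by
    intro x hx
    rw [hX] at hx
    simpa using hx
  have hcomp : ∀ n ∈ S,
      @IsComponent L X (pullbackStruct L (Subtype.val : X → M))
        {x : X | (x : M) ∈ f n} ∧ ({x : X | (x : M) ∈ f n} : Set X).ncard = t' := by
    intro n hn
    refine ⟨piece_is_component f S X hXsub hXcov (fun m _ => (hf m).2.1) hsep hn
      (hfne n), ?_⟩
    have himg : Subtype.val '' {x : X | (x : M) ∈ f n} = f n := by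
      ext z
      constructor
      · rintro ⟨x, hx, rfl⟩; exact hx
      · intro hz; exact ⟨⟨z, hXsub n hn hz⟩, hz, rfl⟩
    have := Set.ncard_image_of_injective {x : X | (x : M) ∈ f n} Subtype.val_injective
    rw [himg] at this
    rw [← this]
    exact hn
  haveI : Infinite ↥S := hSinf.to_subtype
  refine Set.infinite_of_injective_forall_mem
    (f := fun n : ↥S => ({x : X | (x : M) ∈ f n.1} : Set X)) ?_ ?_
  · intro n m hnm
    by_contra hne
    obtain ⟨a, ha⟩ := hfne n.1
    have haX : a ∈ X := hXsub n.1 n.2 ha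
    have hnm' : {x : X | (x : M) ∈ f n.1} = {x : X | (x : M) ∈ f m.1} := hnm
    have : (⟨a, haX⟩ : X) ∈ {x : X | (x : M) ∈ f m.1} := hnm' ▸ ha
    exact hfdisj n.1 m.1 (fun h => hne (Subtype.ext h)) a ha this
  · intro n
    exact (hcomp n.1 n.2)
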